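/- Let S be a convex compact subset of ℝ^M and f : ℝ^M → ℝ^M a map that is Lipschitz on S with constant L and satisfies the one-sided Lipschitz condition on S with constant λ > 0, i.e. ⟪f(y₁) − f(y₂), y₁ − y₂⟫ ≤ λ‖y₁ − y₂‖² for all y₁, y₂ ∈ S. Set C = sup_{y∈S} L·‖f(y)‖. Let y₀, z₀ ∈ S with ‖y₀ − z₀‖ ≤ ε, let y : [0,τ] → S solve y′(t) = f(y(t)) with y(0) = y₀, and let ỹ(t) = z₀ + t·f(z₀) be the explicit Euler approximation, assumed to remain in S for t ∈ [0,τ]. Then for all t ∈ [0,τ]: ‖y(t) − ỹ(t)‖ ≤ ( ε²·e^{3λt} + (C²/(3λ²))·( −t² − 2t/(3λ) + (2/(9λ²))·(e^{3λt} − 1) ) )^{1/2}. -/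

import Mathlib

set_option maxHeartbeats 1000000


open Set Real
open scoped RealInnerProductSpace

/-- Euler error bound for a one-sided Lipschitz vector field with positive
OSL constant `lam > 0` (Proposition 1, case `λ > 0`). -/
theorem euler_error_bound_pos_osl {M : ℕ}
    (S : Set (EuclideanSpace ℝ (Fin M)))
    (hSconv : Convex ℝ S) (hScomp : IsCompact S)
    (f : EuclideanSpace ℝ (Fin M) → EuclideanSpace ℝ (Fin M))
    (L lam C ε τ : ℝ) (hlam : 0 < lam)
    (hLip : ∀ y₁ ∈ S, ∀ y₂ ∈ S, ‖f y₁ - f y₂‖ ≤ L * ‖y₁ - y₂‖)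
    (hOSL : ∀ y₁ ∈ S, ∀ y₂ ∈ S,
      ⟪f y₁ - f y₂, y₁ - y₂⟫ ≤ lam * ‖y₁ - y₂‖ ^ 2)
    (hC : IsLUB ((fun y => L * ‖f y‖) '' S) C)
    (y₀ z₀ : EuclideanSpace ℝ (Fin M)) (hy₀S : y₀ ∈ S) (hz₀S : z₀ ∈ S)
    (hyz : ‖y₀ - z₀‖ ≤ ε)
    (y : ℝ → EuclideanSpace ℝ (Fin M))
    (hy0 : y 0 = y₀)
    (hyS : ∀ t ∈ Icc (0 : ℝ) τ, y t ∈ S)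
    (hy' : ∀ t ∈ Icc (0 : ℝ) τ, HasDerivAt y (f (y t)) t)
    (hEulerS : ∀ t ∈ Icc (0 : ℝ) τ, z₀ + t • f z₀ ∈ S) :
    ∀ t ∈ Icc (0 : ℝ) τ,
      ‖y t - (z₀ + t • f z₀)‖ ≤
        Real.sqrt (ε ^ 2 * Real.exp (3 * lam * t) +
          C ^ 2 / (3 * lam ^ 2) *
            (-t ^ 2 - 2 * t / (3 * lam) +
              2 / (9 * lam ^ 2) * (Real.exp (3 * lam * t) - 1))) := by
  have hlam' : lam ≠ 0 := ne_of_gt hlam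
  -- Euler approximation
  set g : ℝ → EuclideanSpace ℝ (Fin M) := fun t => z₀ + t • f z₀ with hg
  -- squared error
  set E : ℝ → ℝ := fun t => ⟪y t - g t, y t - g t⟫ with hE
  have hEnorm : ∀ t, E t = ‖y t - g t‖ ^ 2 := fun t => real_inner_self_eq_norm_sq _
  -- the comparison function
  set v : ℝ → ℝ := fun t => ε ^ 2 * Real.exp (3 * lam * t) +
      C ^ 2 / (3 * lam ^ 2) *
        (-t ^ 2 - 2 * t / (3 * lam) +
          2 / (9 * lam ^ 2) * (Real.exp (3 * lam * t) - 1)) with hv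
  -- derivative of g
  have hg' : ∀ t : ℝ, HasDerivAt g (f z₀) t := by
    intro t
    have : HasDerivAt (fun t : ℝ => t • f z₀) ((1 : ℝ) • f z₀) t :=
      (hasDerivAt_id t).smul_const (f z₀)
    simpa [hg] using (this.const_add z₀)
  -- derivative of E
  have hE' : ∀ t ∈ Icc (0 : ℝ) τ,
      HasDerivAt E (2 * ⟪f (y t) - f z₀, y t - g t⟫) t := by
    intro t ht
    have hu : HasDerivAt (fun s => y s - g s) (f (y t) - f z₀) t := (hy' t ht).sub (hg' t)
    have := HasDerivAt.inner ℝ hu hu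
    have h2 : ⟪y t - g t, f (y t) - f z₀⟫ + ⟪f (y t) - f z₀, y t - g t⟫
        = 2 * ⟪f (y t) - f z₀, y t - g t⟫ := by
      rw [real_inner_comm]; ring
    rw [h2] at this
    exact this
  -- derivative of v
  have hv' : ∀ t : ℝ, HasDerivAt v (3 * lam * v t + C ^ 2 * t ^ 2 / lam) t := by
    intro t
    have hexp : HasDerivAt (fun s : ℝ => Real.exp (3 * lam * s))
        (Real.exp (3 * lam * t) * (3 * lam)) t := by
      have : HasDerivAt (fun s : ℝ => 3 * lam * s) (3 * lam) t := by
        simpa using (hasDerivAt_id t).const_mul (3 * lam)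
      exact this.exp
    have h1 : HasDerivAt (fun s : ℝ => ε ^ 2 * Real.exp (3 * lam * s))
        (ε ^ 2 * (Real.exp (3 * lam * t) * (3 * lam))) t := hexp.const_mul _
    have h2 : HasDerivAt (fun s : ℝ => -s ^ 2 - 2 * s / (3 * lam) +
        2 / (9 * lam ^ 2) * (Real.exp (3 * lam * s) - 1))
        (-(2 * t) - 2 / (3 * lam) + 2 / (9 * lam ^ 2) * (Real.exp (3 * lam * t) * (3 * lam))) t := by
      have ha : HasDerivAt (fun s : ℝ => -s ^ 2) (-(2 * t)) t := by
        exact (hasDerivAt_pow 2 t).neg.congr_deriv (by norm_num)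
      have hb : HasDerivAt (fun s : ℝ => 2 * s / (3 * lam)) (2 / (3 * lam)) t := by
        have : HasDerivAt (fun s : ℝ => 2 * s / (3 * lam)) (2 * 1 / (3 * lam)) t := by
          exact ((hasDerivAt_id t).const_mul 2).div_const (3 * lam)
        simpa using this
      have hc : HasDerivAt (fun s : ℝ => 2 / (9 * lam ^ 2) * (Real.exp (3 * lam * s) - 1))
          (2 / (9 * lam ^ 2) * (Real.exp (3 * lam * t) * (3 * lam))) t := by
        simpa using ((hexp.sub_const 1).const_mul (2 / (9 * lam ^ 2)))
      exact (ha.sub hb).add hc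
    have := h1.add (h2.const_mul (C ^ 2 / (3 * lam ^ 2)))
    convert this using 1
    rfl
    rfl
    rfl
    simp only [hv]
    field_simp
    ring
  -- the differential inequality for E
  have hkey : ∀ t ∈ Icc (0 : ℝ) τ,
      2 * ⟪f (y t) - f z₀, y t - g t⟫ ≤ 3 * lam * E t + C ^ 2 * t ^ 2 / lam := by
    intro t ht
    set w := y t - g t with hw
    have hgS : g t ∈ S := hEulerS t ht
    have hyt : y t ∈ S := hyS t ht
    have hsplit : ⟪f (y t) - f z₀, w⟫
        = ⟪f (y t) - f (g t), w⟫ + ⟪f (g t) - f z₀, w⟫ := by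
      rw [← inner_add_left]; congr 1; abel
    have h1 : ⟪f (y t) - f (g t), w⟫ ≤ lam * ‖w‖ ^ 2 := hOSL (y t) hyt (g t) hgS
    have hCz : L * ‖f z₀‖ ≤ C := hC.1 ⟨z₀, hz₀S, rfl⟩
    have hgz : ‖g t - z₀‖ = t * ‖f z₀‖ := by
      simp [hg, norm_smul, abs_of_nonneg ht.1]
    have h2 : ⟪f (g t) - f z₀, w⟫ ≤ C * t * ‖w‖ := by
      calc ⟪f (g t) - f z₀, w⟫ ≤ ‖f (g t) - f z₀‖ * ‖w‖ := real_inner_le_norm _ _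
        _ ≤ (L * ‖g t - z₀‖) * ‖w‖ :=
          mul_le_mul_of_nonneg_right (hLip (g t) hgS z₀ hz₀S) (norm_nonneg _)
        _ ≤ C * t * ‖w‖ := by
          apply mul_le_mul_of_nonneg_right _ (norm_nonneg _)
          rw [hgz]
          nlinarith [ht.1, hCz, norm_nonneg (f z₀)]
    have hE2 : E t = ‖w‖ ^ 2 := hEnorm t
    rw [hE2]
    have hAM : 2 * (C * t * ‖w‖) ≤ lam * ‖w‖ ^ 2 + C ^ 2 * t ^ 2 / lam := by
      rw [← sub_nonneg]
      have heq : lam * ‖w‖ ^ 2 + C ^ 2 * t ^ 2 / lam - 2 * (C * t * ‖w‖)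
          = (lam * ‖w‖ - C * t) ^ 2 / lam := by field_simp; ring
      rw [heq]; positivity
    nlinarith [h1, h2, hAM, hsplit]
  -- auxiliary function h
  set h : ℝ → ℝ := fun t => (E t - v t) * Real.exp (-(3 * lam) * t) with hh
  have hh' : ∀ t ∈ Icc (0 : ℝ) τ, HasDerivAt h
      ((2 * ⟪f (y t) - f z₀, y t - g t⟫ - (3 * lam * v t + C ^ 2 * t ^ 2 / lam)) *
        Real.exp (-(3 * lam) * t)
        + (E t - v t) * (Real.exp (-(3 * lam) * t) * (-(3 * lam)))) t := by
    intro t ht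
    have hexp : HasDerivAt (fun s : ℝ => Real.exp (-(3 * lam) * s))
        (Real.exp (-(3 * lam) * t) * (-(3 * lam))) t := by
      have : HasDerivAt (fun s : ℝ => -(3 * lam) * s) (-(3 * lam)) t := by
        simpa using (hasDerivAt_id t).const_mul (-(3 * lam))
      exact this.exp
    exact ((hE' t ht).sub (hv' t)).mul hexp
  have hderiv_nonpos : ∀ t ∈ Icc (0 : ℝ) τ,
      (2 * ⟪f (y t) - f z₀, y t - g t⟫ - (3 * lam * v t + C ^ 2 * t ^ 2 / lam)) *
        Real.exp (-(3 * lam) * t)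
        + (E t - v t) * (Real.exp (-(3 * lam) * t) * (-(3 * lam))) ≤ 0 := by
    intro t ht
    have hk := hkey t ht
    have he : (0:ℝ) < Real.exp (-(3 * lam) * t) := Real.exp_pos _
    nlinarith [mul_nonneg (sub_nonneg.2 hk) he.le]
  -- h is antitone on [0, τ]
  have hcont : ContinuousOn h (Icc 0 τ) := fun t ht =>
    ((hh' t ht).continuousAt).continuousWithinAt
  have hanti : AntitoneOn h (Icc 0 τ) := by
    apply antitoneOn_of_deriv_nonpos (convex_Icc 0 τ) hcont
    · intro t ht
      rw [interior_Icc] at ht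
      exact ((hh' t (Ioo_subset_Icc_self ht)).differentiableAt).differentiableWithinAt
    · intro t ht
      rw [interior_Icc] at ht
      rw [(hh' t (Ioo_subset_Icc_self ht)).deriv]
      exact hderiv_nonpos t (Ioo_subset_Icc_self ht)
  intro t ht
  have h0mem : (0:ℝ) ∈ Icc (0:ℝ) τ := ⟨le_refl 0, le_trans ht.1 ht.2⟩
  have hht0 : h t ≤ h 0 := hanti h0mem ht ht.1
  have hE0 : E 0 ≤ ε ^ 2 := by
    rw [hEnorm]
    have : ‖y 0 - g 0‖ = ‖y₀ - z₀‖ := by simp [hg, hy0]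
    rw [this]
    have hε0 : 0 ≤ ε := le_trans (norm_nonneg _) hyz
    nlinarith [norm_nonneg (y₀ - z₀)]
  have hv0 : v 0 = ε ^ 2 := by simp [hv]
  have hh0 : h 0 ≤ 0 := by
    simp only [hh]
    have : E 0 - v 0 ≤ 0 := by rw [hv0]; linarith
    have he : (0:ℝ) < Real.exp (-(3 * lam) * 0) := Real.exp_pos _
    exact mul_nonpos_of_nonpos_of_nonneg this he.le
  have hEv : E t ≤ v t := by
    have hht : (E t - v t) * Real.exp (-(3 * lam) * t) ≤ 0 := le_trans hht0 hh0
    have he : (0:ℝ) < Real.exp (-(3 * lam) * t) := Real.exp_pos _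
    by_contra hc
    push_neg at hc
    nlinarith [mul_pos (sub_pos.2 hc) he]
  rw [show z₀ + t • f z₀ = g t from rfl]
  have hvnn : 0 ≤ v t := by
    have := hEnorm t
    nlinarith [sq_nonneg ‖y t - g t‖]
  rw [Real.le_sqrt (norm_nonneg _)]
  calc ‖y t - g t‖ ^ 2 = E t := (hEnorm t).symm
    _ ≤ v t := hEv
    _ = _ := rfl
  exact hvnn
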